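/- In any feasible MRED solution with all swapping probabilities q_k ≤ 1, the total net end-to-end EDR Σ_{s:t∈U} (I(s:t) − Ω(s:t)) is at most the total elementary ebit generation rate Σ_{e=(m:n)∈E} p_e · c_e · g_{m:n}, and hence at most Σ_{e∈E} p_e · c_e. -/
import Mathlib


open Finset

/-- Input rate `I(m:n)`: ebits generated along a physical link `m:n` plus ebits obtained
by swapping at intermediate nodes `k`, discounted by success probabilities (Eq. (2d)). -/
noncomputable def Iin {V : Type*} [Fintype V] [DecidableEq V] (Edge : V → V → Prop) [DecidableRel Edge]
    (p c : V → V → ℝ) (q : V → ℝ) (g : V → V → ℝ) (f : V × V → V × V → ℝ)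
    (m n : V) : ℝ :=
  (if Edge m n then p m n * c m n * g m n else 0) +
    ∑ k ∈ univ.filter fun k => k ≠ m ∧ k ≠ n,
      q k / 2 * (f (m, k) (m, n) + f (k, n) (m, n))

/-- Output rate `Ω(m:n)`: `m:n`-ebits consumed for swapping toward other pairs (Eq. (2e)). -/
noncomputable def Omeg {V : Type*} [Fintype V] [DecidableEq V] (f : V × V → V × V → ℝ) (m n : V) : ℝ :=
  ∑ k ∈ univ.filter fun k => k ≠ m ∧ k ≠ n, (f (m, n) (m, k) + f (m, n) (k, n))

/-- Feasibility for the MRED program (1): nonnegativity, `g ∈ [0,1]`, unordered-pair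
symmetry of `f`, no degenerate self-pairs, balanced swapping (2a), flow conservation for
non-SD pairs (2b), and surplus for SD pairs (2c). -/
def MREDFeasible {V : Type*} [Fintype V] [DecidableEq V] (Edge : V → V → Prop)
    [DecidableRel Edge] (p c : V → V → ℝ) (q : V → ℝ) (U : Finset (V × V))
    (f : V × V → V × V → ℝ) (g : V → V → ℝ) : Prop :=
  (∀ a b, 0 ≤ f a b) ∧
  (∀ m n, 0 ≤ g m n ∧ g m n ≤ 1) ∧
  (∀ a x, f a x = f a.swap x) ∧
  (∀ x b, f x b = f x b.swap) ∧
  (∀ a b, a.1 = a.2 ∨ b.1 = b.2 → f a b = 0) ∧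
  (∀ m k n, f (m, k) (m, n) = f (k, n) (m, n)) ∧
  (∀ m n, (m, n) ∉ U → Iin Edge p c q g f m n = Omeg f m n) ∧
  (∀ m n, (m, n) ∈ U → Omeg f m n ≤ Iin Edge p c q g f m n)

/-- In any feasible MRED solution with swapping probabilities `q_k ≤ 1`, the total net
end-to-end EDR of the SD pairs is at most the total elementary ebit generation rate
`Σ_{e∈E} p_e c_e g_e`, and hence at most `Σ_{e∈E} p_e c_e`. -/
theorem stmt7 {V : Type*} [Fintype V] [DecidableEq V] (Edge : V → V → Prop)
    [DecidableRel Edge] (p c : V → V → ℝ) (q : V → ℝ) (U : Finset (V × V))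
    (f : V × V → V × V → ℝ) (g : V → V → ℝ)
    (hq0 : ∀ k, 0 ≤ q k) (hq1 : ∀ k, q k ≤ 1)
    (hEsymm : ∀ m n, Edge m n → Edge n m)
    (hUsymm : ∀ mn ∈ U, Prod.swap mn ∈ U)
    (hpe : ∀ m n, Edge m n → 0 < p m n ∧ p m n ≤ 1)
    (hce : ∀ m n, Edge m n → 0 < c m n)
    (hpsymm : ∀ m n, p m n = p n m) (hcsymm : ∀ m n, c m n = c n m)
    (hgsymm : ∀ m n, g m n = g n m)
    (hfeas : MREDFeasible Edge p c q U f g) :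
    (∑ mn ∈ U, (Iin Edge p c q g f mn.1 mn.2 - Omeg f mn.1 mn.2)) ≤
      (∑ mn ∈ Finset.univ.filter fun mn : V × V => Edge mn.1 mn.2,
        p mn.1 mn.2 * c mn.1 mn.2 * g mn.1 mn.2) ∧
    (∑ mn ∈ Finset.univ.filter fun mn : V × V => Edge mn.1 mn.2,
        p mn.1 mn.2 * c mn.1 mn.2 * g mn.1 mn.2) ≤
      ∑ mn ∈ Finset.univ.filter fun mn : V × V => Edge mn.1 mn.2,
        p mn.1 mn.2 * c mn.1 mn.2 := by
  obtain ⟨hf0, hg, hsa, hsb, hdeg, hbal, hcons, hsur⟩ := hfeas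
  constructor
  · -- main inequality
    have h1 : (∑ mn ∈ U, (Iin Edge p c q g f mn.1 mn.2 - Omeg f mn.1 mn.2))
        = ∑ mn : V × V, (Iin Edge p c q g f mn.1 mn.2 - Omeg f mn.1 mn.2) := by
      refine Finset.sum_subset (Finset.subset_univ U) ?_
      intro x _ hx
      rw [hcons x.1 x.2 (by simpa using hx)]
      ring
    rw [h1]
    have h2 : ∀ mn : V × V, Iin Edge p c q g f mn.1 mn.2 - Omeg f mn.1 mn.2
        = (if Edge mn.1 mn.2 then p mn.1 mn.2 * c mn.1 mn.2 * g mn.1 mn.2 else 0)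
          + ((∑ k ∈ univ.filter fun k => k ≠ mn.1 ∧ k ≠ mn.2,
                q k * f (mn.1, k) (mn.1, mn.2))
             - Omeg f mn.1 mn.2) := by
      intro mn
      unfold Iin
      have hh : ∀ k, q k / 2 * (f (mn.1, k) (mn.1, mn.2) + f (k, mn.2) (mn.1, mn.2))
          = q k * f (mn.1, k) (mn.1, mn.2) := by
        intro k; rw [← hbal mn.1 k mn.2]; ring
      simp_rw [hh]
      ring
    simp_rw [h2]
    rw [Finset.sum_add_distrib]
    have h3 : (∑ mn : V × V,
          if Edge mn.1 mn.2 then p mn.1 mn.2 * c mn.1 mn.2 * g mn.1 mn.2 else 0)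
        = ∑ mn ∈ Finset.univ.filter fun mn : V × V => Edge mn.1 mn.2,
            p mn.1 mn.2 * c mn.1 mn.2 * g mn.1 mn.2 := by
      rw [Finset.sum_filter]
    rw [h3]
    have h4 : (∑ mn : V × V, ((∑ k ∈ univ.filter fun k => k ≠ mn.1 ∧ k ≠ mn.2,
          q k * f (mn.1, k) (mn.1, mn.2)) - Omeg f mn.1 mn.2)) ≤ 0 := by
      rw [Finset.sum_sub_distrib]
      rw [sub_nonpos]
      rw [Fintype.sum_prod_type, Fintype.sum_prod_type]
      have hIN : ∀ m : V,
          (∑ n : V, ∑ k ∈ univ.filter fun k => k ≠ m ∧ k ≠ n, q k * f (m, k) (m, n))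
          = ∑ n : V, ∑ k : V, if n ≠ m ∧ n ≠ k then q n * f (m, n) (m, k) else 0 := by
        intro m
        simp_rw [Finset.sum_filter]
        exact Finset.sum_comm
      simp_rw [hIN]
      unfold Omeg
      simp_rw [Finset.sum_filter]
      refine Finset.sum_le_sum fun m _ => Finset.sum_le_sum fun n _ =>
        Finset.sum_le_sum fun k _ => ?_
      by_cases h1 : n ≠ m ∧ n ≠ k
      · rw [if_pos h1]
        by_cases h2 : k ≠ m ∧ k ≠ n
        · rw [if_pos h2]
          have a1 := hf0 (m, n) (m, k)
          have a2 := hf0 (m, n) (k, n)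
          nlinarith [hq0 n, hq1 n]
        · rw [if_neg h2]
          push_neg at h2
          rcases eq_or_ne k m with hk | hk
          · have hz : f (m, n) (m, k) = 0 := by subst hk; exact hdeg _ _ (Or.inr rfl)
            rw [hz, mul_zero]
          · exact absurd (h2 hk).symm h1.2
      · rw [if_neg h1]
        split
        · have a1 := hf0 (m, n) (m, k); have a2 := hf0 (m, n) (k, n); linarith
        · exact le_refl 0
    linarith
  · refine Finset.sum_le_sum fun mn hmn => ?_
    simp only [Finset.mem_filter] at hmn
    have hp := hpe mn.1 mn.2 hmn.2
    have hc := hce mn.1 mn.2 hmn.2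
    have hgg := hg mn.1 mn.2
    nlinarith [mul_pos hp.1 hc]
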